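/- Let k > 0, let n be a positive integer, and let a, b, α_1,…,α_n, β_1,…,β_n be real numbers with 0 < a ≤ b, α_i > 0, β_i > 0, and such that for all t ∈ [0,∞) and all i: at + α_i > 0, bt + β_i > 0, at + α_i ≤ bt + β_i, and ψ_k(at+α_i) > 0. Then the function X(t) = ∏_{i=1}^n Γ_k(at+α_i)/Γ_k(bt+β_i) is non-increasing on [0,∞). -/

import Mathlib

open Real

/-- The k-Gamma function `Γ_k(t) = ∫₀^∞ e^{-x^k/k} x^{t-1} dx`. -/
noncomputable def gammak (k t : ℝ) : ℝ :=
  ∫ x in Set.Ioi (0 : ℝ), Real.exp (-(x ^ k) / k) * x ^ (t - 1)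

/-- The k-digamma function, defined via its series representation
`ψ_k(t) = (ln k − γ)/k − 1/t + ∑_{n=1}^∞ t/(nk(nk+t))`. -/
noncomputable def psik (k t : ℝ) : ℝ :=
  (Real.log k - eulerMascheroniConstant) / k - 1 / t +
    ∑' n : ℕ, t / (((n : ℝ) + 1) * k * (((n : ℝ) + 1) * k + t))

section Aux

open MeasureTheory Set Filter Topology

local notation "γ" => Real.eulerMascheroniConstant

noncomputable def psi (s : ℝ) : ℝ := deriv (fun x => Real.log (Real.Gamma x)) s

lemma diff_logGamma {x : ℝ} (hx : 0 < x) :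
    DifferentiableAt ℝ (fun x => Real.log (Real.Gamma x)) x := by
  refine (Real.differentiableAt_Gamma ?_).log (Real.Gamma_ne_zero ?_) <;>
    exact fun m => ne_of_gt (lt_of_le_of_lt (neg_nonpos.mpr (Nat.cast_nonneg m)) hx)

lemma hasDerivAt_logGamma {x : ℝ} (hx : 0 < x) :
    HasDerivAt (fun x => Real.log (Real.Gamma x)) (psi x) x :=
  (diff_logGamma hx).hasDerivAt

lemma psi_rec {x : ℝ} (hx : 0 < x) : psi (x + 1) = psi x + 1 / x := by
  unfold psi
  rw [← deriv_comp_add_const, one_div, ← Real.deriv_log,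
    ← deriv_add (diff_logGamma hx) (Real.differentiableAt_log hx.ne')]
  apply Filter.EventuallyEq.deriv_eq
  filter_upwards [eventually_gt_nhds hx] with y hy
  simp only [Real.Gamma_add_one hy.ne', Real.log_mul hy.ne'
    (Real.Gamma_pos_of_pos hy).ne', add_comm, Pi.add_apply]

lemma psi_lb {x : ℝ} (hx : 0 < x) : Real.log x ≤ psi (x + 1) := by
  have hc : ConvexOn ℝ (Ioi 0) (Real.log ∘ Real.Gamma) := Real.convexOn_log_Gamma
  have := hc.slope_le_deriv (mem_Ioi.mpr hx) (mem_Ioi.mpr (by linarith : (0:ℝ) < x + 1))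
    (by linarith) (diff_logGamma (by linarith))
  refine le_trans (le_of_eq ?_) this
  rw [slope_def_field, show x + 1 - x = (1:ℝ) by ring, div_one]
  simp only [Function.comp_apply, Real.Gamma_add_one hx.ne',
    Real.log_mul hx.ne' (Real.Gamma_pos_of_pos hx).ne']
  ring

lemma psi_ub {x : ℝ} (hx : 0 < x) : psi (x + 1) ≤ Real.log (x + 1) := by
  have hc : ConvexOn ℝ (Ioi 0) (Real.log ∘ Real.Gamma) := Real.convexOn_log_Gamma
  have := hc.deriv_le_slope (mem_Ioi.mpr (by linarith : (0:ℝ) < x + 1))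
    (mem_Ioi.mpr (by linarith : (0:ℝ) < x + 2)) (by linarith)
    (diff_logGamma (by linarith))
  refine le_trans this (le_of_eq ?_)
  rw [slope_def_field, show x + 2 - (x + 1) = (1:ℝ) by ring, div_one]
  have h1 : (0:ℝ) < x + 1 := by linarith
  simp only [Function.comp_apply, show x + 2 = (x + 1) + 1 by ring,
    Real.Gamma_add_one h1.ne', Real.log_mul h1.ne' (Real.Gamma_pos_of_pos h1).ne']
  ring

lemma psi_add_nat {s : ℝ} (hs : 0 < s) (N : ℕ) :
    psi (s + N) = psi s + ∑ j ∈ Finset.range N, 1 / (s + j) := by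
  induction N with
  | zero => simp
  | succ N ih =>
    have h1 : (0:ℝ) < s + N := by positivity
    have h2 : s + ((N:ℕ)+1:ℕ) = (s + N) + 1 := by push_cast; ring
    rw [h2, psi_rec h1, ih, Finset.sum_range_succ]
    ring

lemma tendsto_log_add_sub_log (c : ℝ) :
    Tendsto (fun N : ℕ => Real.log (N + c) - Real.log N) atTop (𝓝 0) := by
  have h1 : Tendsto (fun N : ℕ => 1 + c / N) atTop (𝓝 1) := by
    have := tendsto_const_div_atTop_nhds_zero_nat c
    simpa using tendsto_const_nhds.add this
  have h2 : Tendsto (fun N : ℕ => Real.log (1 + c / N)) atTop (𝓝 0) := by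
    have := (Real.continuousAt_log (by norm_num : (1:ℝ) ≠ 0)).tendsto.comp h1
    simpa [Function.comp_def] using this
  refine h2.congr' ?_
  filter_upwards [eventually_gt_atTop (1 + Nat.ceil |c|)] with N hN
  have hc : |c| ≤ (Nat.ceil |c| : ℝ) := Nat.le_ceil _
  have hN1 : (1 + Nat.ceil |c| : ℝ) < N := by exact_mod_cast hN
  have hN0 : (0:ℝ) < N := by
    have : (0:ℝ) ≤ (Nat.ceil |c| : ℝ) := Nat.cast_nonneg _
    linarith
  have hNc : (0:ℝ) < N + c := by
    have : -c ≤ |c| := neg_le_abs c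
    linarith
  rw [← Real.log_div hNc.ne' hN0.ne']
  congr 1
  field_simp

lemma tendsto_psi_shift_sub_log {s : ℝ} (hs : 0 < s) :
    Tendsto (fun N : ℕ => psi (s + N) - Real.log N) atTop (𝓝 0) := by
  refine tendsto_of_tendsto_of_tendsto_of_le_of_le'
    (tendsto_log_add_sub_log (s - 1)) (tendsto_log_add_sub_log s) ?_ ?_
  · filter_upwards [eventually_ge_atTop 1] with N hN
    have hN1 : (1:ℝ) ≤ N := by exact_mod_cast hN
    have hx : (0:ℝ) < s + N - 1 := by linarith
    have := psi_lb hx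
    rw [show s + N - 1 + 1 = s + N by ring] at this
    have heq : Real.log (↑N + (s - 1)) = Real.log (s + N - 1) := by ring_nf
    rw [heq]
    linarith
  · filter_upwards [eventually_ge_atTop 1] with N hN
    have hN1 : (1:ℝ) ≤ N := by exact_mod_cast hN
    have hx : (0:ℝ) < s + N - 1 := by linarith
    have := psi_ub hx
    rw [show s + N - 1 + 1 = s + N by ring] at this
    rw [show ((N:ℝ) + s) = s + N from by ring]
    linarith

lemma tendsto_log_sub_sum {s : ℝ} (hs : 0 < s) :
    Tendsto (fun N : ℕ => Real.log N - ∑ j ∈ Finset.range N, 1 / (s + j))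
      atTop (𝓝 (psi s)) := by
  have key : ∀ N : ℕ, Real.log N - ∑ j ∈ Finset.range N, 1 / (s + j)
      = psi s - (psi (s + N) - Real.log N) := by
    intro N; rw [psi_add_nat hs N]; ring
  simp only [key]
  simpa using tendsto_const_nhds.sub (tendsto_psi_shift_sub_log hs)

lemma summable_aux {k t : ℝ} (hk : 0 < k) (ht : 0 < t) :
    Summable (fun n : ℕ => t / (((n:ℝ) + 1) * k * (((n:ℝ) + 1) * k + t))) := by
  have hbase : Summable (fun n : ℕ => 1 / ((n:ℝ) + 1) ^ 2) := by
    have h := Real.summable_one_div_nat_pow.mpr (by norm_num : 1 < 2)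
    rw [← summable_nat_add_iff 1] at h
    refine h.congr fun n => ?_
    push_cast; ring
  refine Summable.of_nonneg_of_le (fun n => by positivity) (fun n => ?_)
    (hbase.mul_left (t / (k * k)))
  have hn1 : (0:ℝ) < (n:ℝ) + 1 := by positivity
  have hD : k * k * ((n:ℝ) + 1) ^ 2 ≤ ((n:ℝ) + 1) * k * (((n:ℝ) + 1) * k + t) := by
    have h1 : ((n:ℝ) + 1) * k * (((n:ℝ) + 1) * k) = k * k * ((n:ℝ)+1)^2 := by ring
    nlinarith [mul_pos hn1 hk]
  calc t / (((n:ℝ) + 1) * k * (((n:ℝ) + 1) * k + t))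
      ≤ t / (k * k * ((n:ℝ) + 1) ^ 2) :=
        div_le_div_of_nonneg_left ht.le (by positivity) hD
    _ = t / (k * k) * (1 / ((n:ℝ) + 1) ^ 2) := by
        rw [div_mul_div_comm, mul_one]

lemma psi_eq_series {s : ℝ} (hs : 0 < s) :
    psi s = -γ - 1 / s + ∑' n : ℕ, s / (((n:ℝ) + 1) * (((n:ℝ) + 1) + s)) := by
  have hsum : Summable (fun n : ℕ => s / (((n:ℝ) + 1) * (((n:ℝ) + 1) + s))) := by
    have := summable_aux one_pos hs
    simpa using this
  have hps : Tendsto (fun N : ℕ => -γ - 1/s +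
      ∑ n ∈ Finset.range N, s / (((n:ℝ) + 1) * (((n:ℝ) + 1) + s))) atTop
      (𝓝 (-γ - 1/s + ∑' n : ℕ, s / (((n:ℝ) + 1) * (((n:ℝ) + 1) + s)))) :=
    tendsto_const_nhds.add hsum.hasSum.tendsto_sum_nat
  have key : ∀ N : ℕ, -γ - 1/s + ∑ n ∈ Finset.range N, s / (((n:ℝ) + 1) * (((n:ℝ) + 1) + s))
      = ((harmonic N : ℝ) - Real.log N - γ)
        + (Real.log N - ∑ j ∈ Finset.range (N + 1), 1 / (s + j)) := by
    intro N
    have hterm : ∀ n ∈ Finset.range N, s / (((n:ℝ) + 1) * (((n:ℝ) + 1) + s))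
        = 1 / ((n:ℝ) + 1) - 1 / ((n:ℝ) + 1 + s) := by
      intro n _
      have h1 : ((n:ℝ) + 1) ≠ 0 := by positivity
      have h2 : ((n:ℝ) + 1 + s) ≠ 0 := by positivity
      field_simp
      ring
    rw [Finset.sum_congr rfl hterm, Finset.sum_sub_distrib]
    have hh : (harmonic N : ℝ) = ∑ n ∈ Finset.range N, 1 / ((n:ℝ) + 1) := by
      rw [harmonic]
      push_cast
      simp [one_div]
    have hs2 : ∑ j ∈ Finset.range (N + 1), 1 / (s + (j:ℝ))
        = 1 / s + ∑ n ∈ Finset.range N, 1 / ((n:ℝ) + 1 + s) := by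
      rw [Finset.sum_range_succ']
      push_cast
      simp only [Nat.cast_zero, add_zero]
      rw [add_comm]
      congr 1
      refine Finset.sum_congr rfl fun n _ => ?_
      congr 1
      ring
    rw [hh, hs2]
    ring
  have limA : Tendsto (fun N : ℕ => (harmonic N : ℝ) - Real.log N - γ) atTop (𝓝 0) := by
    have := Real.tendsto_harmonic_sub_log.sub_const γ
    simpa using this
  have limB : Tendsto (fun N : ℕ => Real.log N - ∑ j ∈ Finset.range (N + 1), 1 / (s + (j:ℝ)))
      atTop (𝓝 (psi s)) := by
    have h1 := (tendsto_log_sub_sum hs).comp (tendsto_add_atTop_nat 1)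
    have h2 : Tendsto (fun N : ℕ => Real.log N - Real.log (N + 1)) atTop (𝓝 0) := by
      have := (tendsto_log_add_sub_log 1).neg
      simp only [neg_sub, neg_zero] at this
      exact this
    have h3 := h1.add h2
    rw [add_zero] at h3
    refine h3.congr fun N => ?_
    simp only [Function.comp_apply]
    push_cast
    ring
  have limRHS : Tendsto (fun N : ℕ => ((harmonic N : ℝ) - Real.log N - γ)
      + (Real.log N - ∑ j ∈ Finset.range (N + 1), 1 / (s + j))) atTop (𝓝 (psi s)) := by
    have := limA.add limB
    simpa using this
  have := tendsto_nhds_unique (hps.congr key) limRHS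
  linarith [this]

lemma psik_eq {k t : ℝ} (hk : 0 < k) (ht : 0 < t) :
    psik k t = (Real.log k + psi (t / k)) / k := by
  have htk : 0 < t / k := div_pos ht hk
  rw [psik, psi_eq_series htk]
  have hterm : ∀ n : ℕ, (t / k) / (((n:ℝ) + 1) * (((n:ℝ) + 1) + t / k))
      = k * (t / (((n:ℝ) + 1) * k * (((n:ℝ) + 1) * k + t))) := by
    intro n
    have h1 : ((n:ℝ) + 1) ≠ 0 := by positivity
    have h2 : (((n:ℝ) + 1) * k + t) ≠ 0 := by positivity
    field_simp
  rw [tsum_congr hterm, tsum_mul_left]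
  field_simp
  ring

lemma psik_mono {k : ℝ} (hk : 0 < k) {s t : ℝ} (hs : 0 < s) (hst : s ≤ t) :
    psik k s ≤ psik k t := by
  have ht : 0 < t := lt_of_lt_of_le hs hst
  unfold psik
  have h1 : -(1/s) ≤ -(1/t) := by
    rw [neg_le_neg_iff]
    exact one_div_le_one_div_of_le hs hst
  have h2 : (∑' n : ℕ, s / (((n:ℝ) + 1) * k * (((n:ℝ) + 1) * k + s)))
      ≤ ∑' n : ℕ, t / (((n:ℝ) + 1) * k * (((n:ℝ) + 1) * k + t)) := by
    refine Summable.tsum_le_tsum (fun n => ?_) (summable_aux hk hs) (summable_aux hk ht)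
    have hc : (0:ℝ) < ((n:ℝ) + 1) * k := by positivity
    rw [div_le_div_iff₀ (by positivity) (by positivity)]
    nlinarith [mul_nonneg (sub_nonneg.mpr hst) (mul_pos hc hc).le]
  have e1 : ∀ u : ℝ, (Real.log k - γ) / k - 1/u = (Real.log k - γ) / k + -(1/u) := by
    intro u; ring
  rw [e1 s, e1 t]
  linarith [h1, h2]

lemma gammak_eq {k t : ℝ} (hk : 0 < k) (ht : 0 < t) :
    gammak k t = k ^ (t / k - 1) * Real.Gamma (t / k) := by
  have htk : 0 < t / k := div_pos ht hk
  have step1 : Real.Gamma (t / k) = k * ∫ x in Ioi (0:ℝ), Real.exp (-(x ^ k)) * x ^ (t - 1) := by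
    rw [Real.Gamma_eq_integral htk]
    rw [← MeasureTheory.integral_comp_rpow_Ioi_of_pos (g := fun u => Real.exp (-u) * u ^ (t / k - 1)) hk]
    rw [← MeasureTheory.integral_const_mul]
    refine setIntegral_congr_fun measurableSet_Ioi (fun x hx => ?_)
    have hx' : (0:ℝ) < x := hx
    rw [smul_eq_mul, ← Real.rpow_mul hx'.le]
    have h1 : k * (t / k - 1) = t - k := by field_simp
    have h2 : x ^ (k - 1) * x ^ (t - k) = x ^ (t - 1) := by
      rw [← Real.rpow_add hx']; ring_nf
    rw [h1]
    calc k * x ^ (k - 1) * (rexp (-x ^ k) * x ^ (t - k))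
        = k * (rexp (-x ^ k) * (x ^ (k-1) * x ^ (t - k))) := by ring
      _ = k * (rexp (-x ^ k) * x ^ (t - 1)) := by rw [h2]
  -- Step 2: scaling
  have step2 : (∫ x in Ioi (0:ℝ), Real.exp (-(x ^ k)) * x ^ (t - 1))
      = k ^ (-(t / k)) * gammak k t := by
    have hb : (0:ℝ) < k ^ (1 / k) := rpow_pos_of_pos hk _
    have := MeasureTheory.integral_comp_mul_left_Ioi
      (fun x => Real.exp (-(x ^ k) / k) * x ^ (t - 1)) 0 hb
    rw [mul_zero] at this
    have heq : ∀ x ∈ Ioi (0:ℝ),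
        Real.exp (-((k ^ (1/k) * x) ^ k) / k) * (k ^ (1/k) * x) ^ (t - 1)
        = k ^ ((t-1) / k) * (Real.exp (-(x ^ k)) * x ^ (t - 1)) := by
      intro x hx
      have hx' : (0:ℝ) < x := hx
      have h1 : (k ^ (1/k) * x) ^ k = k * x ^ k := by
        rw [Real.mul_rpow (rpow_pos_of_pos hk _).le hx'.le, ← Real.rpow_mul hk.le,
          one_div, inv_mul_cancel₀ hk.ne', Real.rpow_one]
      have h2 : (k ^ (1/k) * x) ^ (t-1) = k ^ ((t-1)/k) * x ^ (t-1) := by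
        rw [Real.mul_rpow (rpow_pos_of_pos hk _).le hx'.le, ← Real.rpow_mul hk.le]
        ring_nf
      rw [h1, h2]
      have h3 : -(k * x ^ k) / k = -(x ^ k) := by field_simp
      rw [h3]; ring
    rw [setIntegral_congr_fun measurableSet_Ioi heq] at this
    rw [MeasureTheory.integral_const_mul] at this
    -- this : k^((t-1)/k) * ∫ e^{-x^k} x^{t-1} = (k^(1/k))⁻¹ • gammak k t
    have hpos : (0:ℝ) < k ^ ((t-1)/k) := rpow_pos_of_pos hk _
    rw [smul_eq_mul] at this
    have key : (∫ x in Ioi (0:ℝ), Real.exp (-(x ^ k)) * x ^ (t - 1))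
        = (k ^ ((t-1)/k))⁻¹ * ((k ^ ((1:ℝ)/k))⁻¹ * gammak k t) := by
      rw [gammak, ← this, ← mul_assoc, inv_mul_cancel₀ hpos.ne', one_mul]
    rw [key, ← mul_assoc, ← Real.rpow_neg hk.le, ← Real.rpow_neg hk.le,
      ← Real.rpow_add hk, show -((t-1)/k) + -(1/k) = -(t/k) by field_simp; ring]
  have h3 : k ^ (t/k-1) * k ^ (-(t/k)) = k⁻¹ := by
    rw [← Real.rpow_add hk, show t/k-1+-(t/k) = -1 by ring, Real.rpow_neg_one]
  rw [step1, step2]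
  calc gammak k t = (k⁻¹ * k) * gammak k t := by field_simp
    _ = (k ^ (t/k-1) * k ^ (-(t/k))) * k * gammak k t := by rw [h3]
    _ = k ^ (t / k - 1) * (k * (k ^ (-(t / k)) * gammak k t)) := by ring


lemma gammak_pos {k t : ℝ} (hk : 0 < k) (ht : 0 < t) : 0 < gammak k t := by
  rw [gammak_eq hk ht]
  exact mul_pos (rpow_pos_of_pos hk _) (Real.Gamma_pos_of_pos (div_pos ht hk))

lemma hasDerivAt_log_gammak {k t : ℝ} (hk : 0 < k) (ht : 0 < t) :
    HasDerivAt (fun t => Real.log (gammak k t)) (psik k t) t := by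
  have htk : 0 < t / k := div_pos ht hk
  have h1 : HasDerivAt (fun t : ℝ => t / k) (1 / k) t := by
    simpa using (hasDerivAt_id t).div_const k
  have h2 : HasDerivAt (fun t : ℝ => Real.log (Real.Gamma (t / k))) (psi (t / k) * (1 / k)) t :=
    HasDerivAt.comp t (hasDerivAt_logGamma htk) h1
  have h3 : HasDerivAt (fun t : ℝ => (t / k - 1) * Real.log k + Real.log (Real.Gamma (t / k)))
      (Real.log k / k + psi (t / k) * (1 / k)) t := by
    have := ((h1.sub_const 1).mul_const (Real.log k)).add h2
    refine this.congr_deriv ?_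
    ring
  have heq : (fun t => Real.log (gammak k t)) =ᶠ[nhds t]
      (fun t => (t / k - 1) * Real.log k + Real.log (Real.Gamma (t / k))) := by
    filter_upwards [eventually_gt_nhds ht] with u hu
    rw [gammak_eq hk hu, Real.log_mul (rpow_pos_of_pos hk _).ne'
      (Real.Gamma_pos_of_pos (div_pos hu hk)).ne', Real.log_rpow hk]
  have h4 := h3.congr_of_eventuallyEq heq
  refine h4.congr_deriv ?_
  rw [psik_eq hk ht]
  ring

end Aux

theorem X_antitone (k : ℝ) (hk : 0 < k) (n : ℕ) (hn : 0 < n)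
    (a b : ℝ) (α β : Fin n → ℝ) (ha : 0 < a) (hab : a ≤ b)
    (hα : ∀ i, 0 < α i) (hβ : ∀ i, 0 < β i)
    (h : ∀ t : ℝ, 0 ≤ t → ∀ i, 0 < a * t + α i ∧ 0 < b * t + β i ∧
      a * t + α i ≤ b * t + β i ∧ 0 < psik k (a * t + α i)) :
    AntitoneOn (fun t : ℝ => ∏ i, gammak k (a * t + α i) / gammak k (b * t + β i))
      (Set.Ici 0) := by
  set F : ℝ → ℝ := fun t => Real.log (gammak k t) with hF
  have hGdiff : ∀ (i : Fin n) (t : ℝ), 0 ≤ t →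
      HasDerivAt (fun t => F (a * t + α i) - F (b * t + β i))
        (psik k (a * t + α i) * a - psik k (b * t + β i) * b) t := by
    intro i t ht0
    obtain ⟨h1, h2, h3, h4⟩ := h t ht0 i
    have da : HasDerivAt (fun t : ℝ => a * t + α i) a t := by
      simpa using ((hasDerivAt_id t).const_mul a).add_const (α i)
    have db : HasDerivAt (fun t : ℝ => b * t + β i) b t := by
      simpa using ((hasDerivAt_id t).const_mul b).add_const (β i)
    exact (HasDerivAt.comp t (hasDerivAt_log_gammak hk h1) da).sub
      (HasDerivAt.comp t (hasDerivAt_log_gammak hk h2) db)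
  have hGanti : ∀ i : Fin n,
      AntitoneOn (fun t => F (a * t + α i) - F (b * t + β i)) (Set.Ici 0) := by
    intro i
    refine antitoneOn_of_deriv_nonpos (convex_Ici 0) ?_ ?_ ?_
    · intro t ht
      exact (hGdiff i t ht).continuousAt.continuousWithinAt
    · intro t ht
      rw [interior_Ici] at ht
      exact (hGdiff i t ht.le).differentiableAt.differentiableWithinAt
    · intro t ht
      rw [interior_Ici] at ht
      rw [(hGdiff i t ht.le).deriv]
      obtain ⟨h1, h2, h3, h4⟩ := h t ht.le i
      have m1 : psik k (a * t + α i) ≤ psik k (b * t + β i) := psik_mono hk h1 h3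
      have hb0 : 0 < b := lt_of_lt_of_le ha hab
      nlinarith [mul_le_mul_of_nonneg_left hab h4.le,
        mul_le_mul_of_nonneg_right m1 hb0.le]
  have hfac : ∀ (i : Fin n) (t : ℝ), 0 ≤ t →
      gammak k (a * t + α i) / gammak k (b * t + β i)
        = Real.exp (F (a * t + α i) - F (b * t + β i)) := by
    intro i t ht0
    obtain ⟨h1, h2, h3, h4⟩ := h t ht0 i
    rw [Real.exp_sub, hF]
    simp only
    rw [Real.exp_log (gammak_pos hk h1), Real.exp_log (gammak_pos hk h2)]
  intro x hx y hy hxy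
  simp only
  refine Finset.prod_le_prod (fun i _ => ?_) (fun i _ => ?_)
  · rw [hfac i y hy]
    positivity
  · rw [hfac i y hy, hfac i x hx]
    exact Real.exp_le_exp.mpr (hGanti i hx hy hxy)
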